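/- (Main exact penalty theorem.) Let E be a real Hilbert space. Let F : E → ℝ be ρ₀-weakly convex and L_F-Lipschitz, and let h_k : E → ℝ be ρ₁-weakly convex and L_h-Lipschitz for k = 1, …, m (m ≥ 1). Let β > 0, set C = ρ₀ + β·ρ₁, let 0 < θ < 1/C, let ε > 0 and δ > 0, and let Φ(x) = F(x) + (β/m)·Σ_{k=1}^m [h_k(x)]_+. Assume the regularity condition: for every x' ∈ E with max_k h_k(x') > 0 and every family w_1, …, w_m where each w_k is a ρ₁-subgradient of y ↦ [h_k(y)]_+ at x', one has ‖(1/m)·Σ_{k=1}^m w_k‖ ≥ δ. Assume β > (ε + L_F)/δ. Suppose x ∈ E, x̄ minimizes y ↦ Φ(y) + ‖y − x‖²/(2θ) over E, and ‖x − x̄‖ ≤ θ·ε. Then there exist multipliers λ_1, …, λ_m ≥ 0, a ρ₀-subgradient v of F at x̄, and for each k a ρ₁-subgradient w_k of h_k at x̄, such that: (i) ‖v + Σ_{k=1}^m λ_k·w_k‖ ≤ ε; (ii) h_k(x̄) ≤ 0 for every k; (iii) λ_k·h_k(x̄) ≤ 0 for every k, and λ_k = 0 whenever h_k(x̄) < 0.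 -/

import Mathlib

open scoped RealInnerProductSpace BigOperators

set_option linter.unusedSectionVars false
set_option linter.unusedVariables false
set_option maxHeartbeats 1000000

section HingePenaltyInfra

variable {E : Type*} [NormedAddCommGroup E] [InnerProductSpace ℝ E] [CompleteSpace E]

def IsSubg (f : E → ℝ) (x v : E) : Prop := ∀ y, f x + ⟪v, y - x⟫ ≤ f y

theorem hp_le_zero_of_small {A K t₀ : ℝ} (ht₀ : 0 < t₀)
    (H : ∀ t : ℝ, 0 < t → t < t₀ → A ≤ K * t) : A ≤ 0 := by
  by_contra hA
  push_neg at hA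
  rcases le_or_gt K 0 with hK | hK
  · have := H (t₀ / 2) (by linarith) (by linarith)
    nlinarith
  · have h1 : 0 < min (t₀ / 2) (A / (2 * K)) := lt_min (by linarith) (by positivity)
    have h2 := H _ h1 (lt_of_le_of_lt (min_le_left _ _) (by linarith))
    have h3 : K * min (t₀ / 2) (A / (2 * K)) ≤ K * (A / (2 * K)) :=
      mul_le_mul_of_nonneg_left (min_le_right _ _) hK.le
    have h4 : K * (A / (2 * K)) = A / 2 := by field_simp
    nlinarith

theorem philin (φ : (E × ℝ) →L[ℝ] ℝ) (y : E) (t : ℝ) :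
    φ (y, t) = φ (y, 0) + t * φ (0, 1) := by
  have : ((y, t) : E × ℝ) = (y, (0 : ℝ)) + t • ((0 : E), (1 : ℝ)) := by
    simp [Prod.smul_mk]
  rw [this, map_add, map_smul, smul_eq_mul]

theorem convexOn_inner_right (u : E) : ConvexOn ℝ Set.univ (fun y : E => ⟪u, y⟫) := by
  refine ⟨convex_univ, ?_⟩
  intro y1 _ y2 _ a b ha hb hab
  simp [inner_add_right, real_inner_smul_right]

theorem exists_subg (f : E → ℝ) (hf : ConvexOn ℝ Set.univ f) (hc : Continuous f) (x : E) :
    ∃ v : E, IsSubg f x v := by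
  set S : Set (E × ℝ) := {p | f p.1 < p.2} with hS
  have hSo : IsOpen S := isOpen_lt (hc.comp continuous_fst) continuous_snd
  have hSc : Convex ℝ S := by
    rintro ⟨y1, t1⟩ h1 ⟨y2, t2⟩ h2 a b ha hb hab
    simp only [hS, Set.mem_setOf_eq] at h1 h2 ⊢
    simp only [Prod.smul_mk, Prod.mk_add_mk, smul_eq_mul]
    have hco := hf.2 (Set.mem_univ y1) (Set.mem_univ y2) ha hb hab
    simp only [smul_eq_mul] at hco
    rcases ha.eq_or_lt with ha' | ha'
    · have hb1 : b = 1 := by linarith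
      nlinarith
    · nlinarith [mul_le_mul_of_nonneg_left h2.le hb]
  obtain ⟨φ, hφ⟩ := geometric_hahn_banach_open_point hSc hSo
    (show (x, f x) ∉ S by simp [hS])
  set c : ℝ := φ (0, 1) with hcdef
  have hneg : c < 0 := by
    have h1 := hφ (x, f x + 1) (by simp [hS])
    have e1 := philin φ x (f x + 1)
    have e2 := philin φ x (f x)
    rw [← hcdef] at e1 e2
    nlinarith
  have key : ∀ y, φ (y, 0) + (f y - f x) * c ≤ φ (x, 0) := by
    intro y
    have h2 : ∀ t : ℝ, 0 < t → t < 1 →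
        φ (y, 0) + (f y - f x) * c - φ (x, 0) ≤ (-c) * t := by
      intro t ht ht1
      have h3 := hφ (y, f y + t) (by simp [hS]; linarith)
      have e1 := philin φ y (f y + t)
      have e2 := philin φ x (f x)
      rw [← hcdef] at e1 e2
      nlinarith
    have := hp_le_zero_of_small one_pos h2
    linarith
  set z := (InnerProductSpace.toDual ℝ E).symm (φ.comp (ContinuousLinearMap.inl ℝ E ℝ)) with hzdef
  have hz : ∀ y, ⟪z, y⟫ = φ (y, 0) := by
    intro y
    rw [hzdef, InnerProductSpace.toDual_symm_apply]
    rfl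
  refine ⟨(-c)⁻¹ • z, fun y => ?_⟩
  have hinner : ⟪(-c)⁻¹ • z, y - x⟫ = (-c)⁻¹ * (φ (y, 0) - φ (x, 0)) := by
    rw [real_inner_smul_left, inner_sub_right, hz, hz]
  rw [hinner]
  have hkey := key y
  have hκ : 0 < (-c)⁻¹ := inv_pos.mpr (neg_pos.mpr hneg)
  have h5 := mul_le_mul_of_nonneg_left
    (show φ (y,0) - φ (x,0) ≤ (f y - f x) * (-c) by linarith) hκ.le
  have h6 : (-c)⁻¹ * ((f y - f x) * (-c)) = f y - f x := by
    rw [mul_comm, mul_assoc, mul_inv_cancel₀ (by linarith : (-c) ≠ (0:ℝ)), mul_one]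
  linarith

theorem subg_split (f g : E → ℝ) (hf : ConvexOn ℝ Set.univ f) (hg : ConvexOn ℝ Set.univ g)
    (hfc : Continuous f) (hgc : Continuous g) (x u : E)
    (hu : ∀ y, f x + g x + ⟪u, y - x⟫ ≤ f y + g y) :
    ∃ v : E, IsSubg f x v ∧ IsSubg g x (u - v) := by
  set f' : E → ℝ := fun y => f y + ⟪-u, y⟫ with hf'def
  have hf'c : ConvexOn ℝ Set.univ f' := hf.add (convexOn_inner_right (-u))
  have hf'cont : Continuous f' := hfc.add (continuous_const.inner continuous_id)
  have hmin : ∀ y, f' x + g x ≤ f' y + g y := by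
    intro y
    have := hu y
    rw [inner_sub_right] at this
    simp only [hf'def, inner_neg_left]
    linarith
  set A : Set (E × ℝ) := {p | f' p.1 - f' x < p.2} with hA
  set B : Set (E × ℝ) := {p | p.2 ≤ g x - g p.1} with hB
  have hAo : IsOpen A := isOpen_lt ((hf'cont.comp continuous_fst).sub continuous_const)
    continuous_snd
  have hAc : Convex ℝ A := by
    rintro ⟨y1, t1⟩ h1 ⟨y2, t2⟩ h2 a b ha hb hab
    simp only [hA, Set.mem_setOf_eq] at h1 h2 ⊢
    simp only [Prod.smul_mk, Prod.mk_add_mk, smul_eq_mul]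
    have hco := hf'c.2 (Set.mem_univ y1) (Set.mem_univ y2) ha hb hab
    simp only [smul_eq_mul] at hco
    have hfx : a * f' x + b * f' x = f' x := by rw [← add_mul, hab, one_mul]
    rcases ha.eq_or_lt with ha' | ha'
    · have ha0 : a = 0 := ha'.symm
      subst ha0
      have hb1 : b = 1 := by linarith
      subst hb1
      simp only [zero_smul, one_smul, zero_add, zero_mul, one_mul] at hco ⊢
      linarith
    · nlinarith [mul_le_mul_of_nonneg_left h2.le hb, mul_lt_mul_of_pos_left h1 ha']
  have hBc : Convex ℝ B := by
    rintro ⟨y1, t1⟩ h1 ⟨y2, t2⟩ h2 a b ha hb hab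
    simp only [hB, Set.mem_setOf_eq] at h1 h2 ⊢
    simp only [Prod.smul_mk, Prod.mk_add_mk, smul_eq_mul]
    have hco := hg.2 (Set.mem_univ y1) (Set.mem_univ y2) ha hb hab
    simp only [smul_eq_mul] at hco
    have hgx : a * g x + b * g x = g x := by rw [← add_mul, hab, one_mul]
    nlinarith [mul_le_mul_of_nonneg_left h1 ha, mul_le_mul_of_nonneg_left h2 hb]
  have hdisj : Disjoint A B := by
    rw [Set.disjoint_left]
    rintro ⟨y, t⟩ h1 h2
    simp only [hA, hB, Set.mem_setOf_eq] at h1 h2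
    have := hmin y
    linarith
  obtain ⟨φ, u₀, hφA, hφB⟩ := geometric_hahn_banach_open hAc hAo hBc hdisj
  set c : ℝ := φ (0, 1) with hcdef
  have hxA : ∀ t : ℝ, 0 < t → ((x, t) : E × ℝ) ∈ A := by
    intro t ht; simp [hA]; linarith
  have hxB : ((x, (0:ℝ)) : E × ℝ) ∈ B := by simp [hB]
  have hneg : c < 0 := by
    have h1 := hφA (x, 1) (hxA 1 one_pos)
    have h2 := hφB _ hxB
    have e1 := philin φ x 1
    have e2 := philin φ x 0
    rw [← hcdef] at e1 e2
    nlinarith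
  have hu₀ : u₀ = φ (x, 0) := by
    have h2 := hφB _ hxB
    have e2 := philin φ x 0
    have hle : φ (x, 0) - u₀ ≤ 0 := by
      apply hp_le_zero_of_small one_pos (K := -c)
      intro t ht ht1
      have h1 := hφA (x, t) (hxA t ht)
      have e1 := philin φ x t
      rw [← hcdef] at e1
      nlinarith
    nlinarith
  have keyA : ∀ y, φ (y, 0) + (f' y - f' x) * c ≤ φ (x, 0) := by
    intro y
    have hle : φ (y, 0) + (f' y - f' x) * c - φ (x, 0) ≤ 0 := by
      apply hp_le_zero_of_small one_pos (K := -c)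
      intro t ht ht1
      have h1 := hφA (y, f' y - f' x + t) (by simp [hA]; linarith)
      have e1 := philin φ y (f' y - f' x + t)
      rw [← hcdef] at e1
      rw [hu₀] at h1
      nlinarith
    linarith
  have keyB : ∀ y, φ (x, 0) ≤ φ (y, 0) + (g x - g y) * c := by
    intro y
    have h1 := hφB (y, g x - g y) (by simp [hB])
    have e1 := philin φ y (g x - g y)
    rw [← hcdef] at e1
    rw [hu₀] at h1
    linarith
  set z := (InnerProductSpace.toDual ℝ E).symm (φ.comp (ContinuousLinearMap.inl ℝ E ℝ)) with hzdef
  have hz : ∀ y, ⟪z, y⟫ = φ (y, 0) := by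
    intro y
    rw [hzdef, InnerProductSpace.toDual_symm_apply]
    rfl
  have hκ : 0 < (-c)⁻¹ := inv_pos.mpr (neg_pos.mpr hneg)
  have hcancel : ∀ r : ℝ, (-c)⁻¹ * (r * (-c)) = r := by
    intro r
    rw [mul_comm, mul_assoc, mul_inv_cancel₀ (by linarith : (-c) ≠ (0:ℝ)), mul_one]
  set v₀ : E := (-c)⁻¹ • z with hv₀
  have hinner : ∀ y, ⟪v₀, y - x⟫ = (-c)⁻¹ * (φ (y, 0) - φ (x, 0)) := by
    intro y
    rw [hv₀, real_inner_smul_left, inner_sub_right, hz, hz]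
  have hsf' : IsSubg f' x v₀ := by
    intro y
    rw [hinner y]
    have h5 := mul_le_mul_of_nonneg_left
      (show φ (y, 0) - φ (x, 0) ≤ (f' y - f' x) * (-c) by nlinarith [keyA y]) hκ.le
    rw [hcancel] at h5
    linarith
  have hsg : IsSubg g x (-v₀) := by
    intro y
    rw [show ⟪-v₀, y - x⟫ = -⟪v₀, y - x⟫ by rw [inner_neg_left], hinner y]
    have h5 := mul_le_mul_of_nonneg_left
      (show (g x - g y) * (-c) ≤ φ (y, 0) - φ (x, 0) by nlinarith [keyB y]) hκ.le
    rw [hcancel] at h5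
    linarith
  refine ⟨v₀ + u, fun y => ?_, ?_⟩
  · have h1 := hsf' y
    have e : ⟪v₀ + u, y - x⟫ = ⟪v₀, y - x⟫ + ⟪u, y - x⟫ := inner_add_left _ _ _
    have e2 : ⟪u, y - x⟫ = ⟪u, y⟫ - ⟪u, x⟫ := inner_sub_right _ _ _
    simp only [hf'def, inner_neg_left] at h1
    rw [e, e2]
    linarith
  · have : u - (v₀ + u) = -v₀ := by abel
    rw [this]
    exact hsg

theorem subg_shift (f : E → ℝ) (t x v : E)
    (h : IsSubg (fun y => f y + ⟪t, y⟫) x v) : IsSubg f x (v - t) := by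
  intro y
  have h1 := h y
  simp only [inner_sub_left, inner_sub_right] at h1 ⊢
  have e : ⟪t, y - x⟫ = ⟪t, y⟫ - ⟪t, x⟫ := inner_sub_right _ _ _
  linarith [e]

theorem convexOn_mul_const (f : E → ℝ) (c : ℝ) (hf : ConvexOn ℝ Set.univ f) (hc : 0 ≤ c) :
    ConvexOn ℝ Set.univ (fun y => c * f y) := by
  refine ⟨convex_univ, ?_⟩
  intro y1 _ y2 _ a b ha hb hab
  have hco := hf.2 (Set.mem_univ y1) (Set.mem_univ y2) ha hb hab
  simp only [smul_eq_mul] at hco ⊢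
  nlinarith [mul_le_mul_of_nonneg_left hco hc]

theorem subg_unscale (f : E → ℝ) (c : ℝ) (hc : 0 < c) (x p : E)
    (h : IsSubg (fun y => c * f y) x p) : IsSubg f x (c⁻¹ • p) := by
  intro y
  have h1 := h y
  simp only at h1
  rw [real_inner_smul_left]
  have h2 := mul_le_mul_of_nonneg_left h1 (inv_pos.mpr hc).le
  have e : c⁻¹ * (c * f x) = f x := by field_simp
  have e2 : c⁻¹ * (c * f y) = f y := by field_simp
  nlinarith

theorem philin2 (φ : (ℝ × ℝ) →L[ℝ] ℝ) (r s : ℝ) :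
    φ (r, s) = r * φ (1, 0) + s * φ (0, 1) := by
  have : ((r, s) : ℝ × ℝ) = r • ((1 : ℝ), (0 : ℝ)) + s • ((0 : ℝ), (1 : ℝ)) := by
    simp [Prod.smul_mk]
  rw [this, map_add, map_smul, map_smul, smul_eq_mul, smul_eq_mul]

theorem subg_max_split (f₁ f₂ : E → ℝ)
    (h₁ : ConvexOn ℝ Set.univ f₁) (h₂ : ConvexOn ℝ Set.univ f₂)
    (h₁c : Continuous f₁) (h₂c : Continuous f₂) (x w : E) (hx : f₁ x = f₂ x)
    (hw : IsSubg (fun y => max (f₁ y) (f₂ y)) x w) :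
    ∃ (lam : ℝ) (a b : E), 0 ≤ lam ∧ lam ≤ 1 ∧ IsSubg f₁ x a ∧ IsSubg f₂ x b ∧
      w = lam • a + (1 - lam) • b := by
  set f₁' : E → ℝ := fun y => f₁ y + ⟪-w, y⟫ with hf₁'
  set f₂' : E → ℝ := fun y => f₂ y + ⟪-w, y⟫ with hf₂'
  have h₁'c : ConvexOn ℝ Set.univ f₁' := h₁.add (convexOn_inner_right (-w))
  have h₂'c : ConvexOn ℝ Set.univ f₂' := h₂.add (convexOn_inner_right (-w))
  have h₁'cont : Continuous f₁' := h₁c.add (continuous_const.inner continuous_id)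
  have h₂'cont : Continuous f₂' := h₂c.add (continuous_const.inner continuous_id)
  set M : ℝ := f₁' x with hM
  have hM2 : f₂' x = M := by simp only [hf₂', hf₁', hM, hx]
  have hmin1 : ∀ y, M ≤ f₁' y ∨ M ≤ f₂' y := by
    intro y
    have h1 := hw y
    have e2 : ⟪w, y - x⟫ = ⟪w, y⟫ - ⟪w, x⟫ := inner_sub_right _ _ _
    simp only [hx, max_self] at h1
    rcases le_total (f₁ y) (f₂ y) with hc | hc
    · right
      rw [max_eq_right hc] at h1
      simp only [hf₂', hf₁', hM, inner_neg_left]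
      linarith
    · left
      rw [max_eq_left hc] at h1
      simp only [hf₁', hM, inner_neg_left]
      linarith
  set A : Set (ℝ × ℝ) := {p | ∃ y, f₁' y - M < p.1 ∧ f₂' y - M < p.2} with hA
  set Q : Set (ℝ × ℝ) := {p | p.1 ≤ 0 ∧ p.2 ≤ 0} with hQ
  have hAo : IsOpen A := by
    have : A = ⋃ y : E, ({p : ℝ × ℝ | f₁' y - M < p.1} ∩ {p : ℝ × ℝ | f₂' y - M < p.2}) := by
      ext p; simp [hA, Set.mem_iUnion, Set.mem_inter_iff]
    rw [this]
    exact isOpen_iUnion fun y =>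
      (isOpen_lt continuous_const continuous_fst).inter
        (isOpen_lt continuous_const continuous_snd)
  have hAc : Convex ℝ A := by
    rintro ⟨r1, s1⟩ ⟨y1, hy1, hy1'⟩ ⟨r2, s2⟩ ⟨y2, hy2, hy2'⟩ a b ha hb hab
    refine ⟨a • y1 + b • y2, ?_, ?_⟩ <;>
      simp only [Prod.smul_mk, Prod.mk_add_mk, smul_eq_mul]
    · have hco := h₁'c.2 (Set.mem_univ y1) (Set.mem_univ y2) ha hb hab
      simp only [smul_eq_mul] at hco
      have hfx : a * M + b * M = M := by rw [← add_mul, hab, one_mul]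
      rcases ha.eq_or_lt with ha' | ha'
      · have ha0 : a = 0 := ha'.symm
        subst ha0
        have hb1 : b = 1 := by linarith
        subst hb1
        simp only [zero_smul, one_smul, zero_add, zero_mul, one_mul] at hco ⊢
        linarith
      · nlinarith [mul_le_mul_of_nonneg_left hy2.le hb, mul_lt_mul_of_pos_left hy1 ha']
    · have hco := h₂'c.2 (Set.mem_univ y1) (Set.mem_univ y2) ha hb hab
      simp only [smul_eq_mul] at hco
      have hfx : a * M + b * M = M := by rw [← add_mul, hab, one_mul]
      rcases ha.eq_or_lt with ha' | ha'
      · have ha0 : a = 0 := ha'.symm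
        subst ha0
        have hb1 : b = 1 := by linarith
        subst hb1
        simp only [zero_smul, one_smul, zero_add, zero_mul, one_mul] at hco ⊢
        linarith
      · nlinarith [mul_le_mul_of_nonneg_left hy2'.le hb, mul_lt_mul_of_pos_left hy1' ha']
  have hQc : Convex ℝ Q := by
    rintro ⟨r1, s1⟩ ⟨h1, h1'⟩ ⟨r2, s2⟩ ⟨h2, h2'⟩ a b ha hb hab
    constructor <;> simp only [Prod.smul_mk, Prod.mk_add_mk, smul_eq_mul] <;>
      nlinarith [mul_le_mul_of_nonneg_left h1 ha, mul_le_mul_of_nonneg_left h2 hb,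
        mul_le_mul_of_nonneg_left h1' ha, mul_le_mul_of_nonneg_left h2' hb]
  have hdisj : Disjoint A Q := by
    rw [Set.disjoint_left]
    rintro ⟨r, s⟩ ⟨y, hy1, hy2⟩ ⟨hq1, hq2⟩
    rcases hmin1 y with hc | hc <;> simp only at hy1 hy2 hq1 hq2 <;> linarith
  obtain ⟨φ, u₀, hφA, hφQ⟩ := geometric_hahn_banach_open hAc hAo hQc hdisj
  set μ₁ : ℝ := φ (1, 0) with hμ₁
  set μ₂ : ℝ := φ (0, 1) with hμ₂
  have hQ0 : u₀ ≤ 0 := by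
    have h0 := hφQ (0, 0) (by simp [hQ])
    have e := philin2 φ 0 0
    rw [e] at h0
    simpa using h0
  have hμ₁le : μ₁ ≤ 0 := by
    by_contra hpos
    push_neg at hpos
    have ht : (0:ℝ) < (-u₀ + 1) / μ₁ := div_pos (by linarith) hpos
    have := hφQ (-((-u₀ + 1) / μ₁), 0) (by
      refine ⟨?_, le_refl 0⟩
      simp only
      linarith)
    have e := philin2 φ (-((-u₀ + 1) / μ₁)) 0
    rw [← hμ₁, ← hμ₂] at e
    rw [e] at this
    have : u₀ ≤ -((-u₀ + 1) / μ₁) * μ₁ := by linarith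
    rw [neg_mul, div_mul_cancel₀ _ (ne_of_gt hpos)] at this
    linarith
  have hμ₂le : μ₂ ≤ 0 := by
    by_contra hpos
    push_neg at hpos
    have ht : (0:ℝ) < (-u₀ + 1) / μ₂ := div_pos (by linarith) hpos
    have := hφQ (0, -((-u₀ + 1) / μ₂)) (by
      refine ⟨le_refl 0, ?_⟩
      simp only
      linarith)
    have e := philin2 φ 0 (-((-u₀ + 1) / μ₂))
    rw [← hμ₁, ← hμ₂] at e
    rw [e] at this
    have : u₀ ≤ -((-u₀ + 1) / μ₂) * μ₂ := by linarith
    rw [neg_mul, div_mul_cancel₀ _ (ne_of_gt hpos)] at this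
    linarith
  have hsum : μ₁ + μ₂ < 0 := by
    have h11 : ((1:ℝ), (1:ℝ)) ∈ A := ⟨x, by simp [hM], by simp [hM2]⟩
    have := hφA _ h11
    have e := philin2 φ 1 1
    rw [← hμ₁, ← hμ₂] at e
    rw [e] at this
    linarith
  have key : ∀ y, μ₁ * (f₁' y - M) + μ₂ * (f₂' y - M) ≤ 0 := by
    intro y
    apply hp_le_zero_of_small one_pos (K := -(μ₁ + μ₂))
    intro t ht ht1
    have hmem : ((f₁' y - M + t, f₂' y - M + t) : ℝ × ℝ) ∈ A := ⟨y, by simp; linarith, by simp; linarith⟩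
    have := hφA _ hmem
    have e := philin2 φ (f₁' y - M + t) (f₂' y - M + t)
    rw [← hμ₁, ← hμ₂] at e
    rw [e] at this
    nlinarith
  set σ : ℝ := -μ₁ + -μ₂ with hσ
  have hσpos : 0 < σ := by simp only [hσ]; linarith
  set lam : ℝ := -μ₁ / σ with hlam
  have hlam0 : 0 ≤ lam := by
    apply div_nonneg (by linarith) hσpos.le
  have hlam1 : lam ≤ 1 := by
    rw [hlam, div_le_one hσpos]
    linarith
  -- x minimizes lam * f₁' + (1-lam) * f₂'
  have hminlam : ∀ y, lam * f₁' x + (1 - lam) * f₂' x + ⟪(0:E), y - x⟫ ≤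
      lam * f₁' y + (1 - lam) * f₂' y := by
    intro y
    have hk := key y
    have h1lam : 1 - lam = -μ₂ / σ := by
      rw [hlam]
      field_simp
      ring
    rw [inner_zero_left, hM2, ← hM]
    have : lam * (f₁' y - M) + (1 - lam) * (f₂' y - M) ≥ 0 := by
      rw [hlam, h1lam]
      rw [div_mul_eq_mul_div, div_mul_eq_mul_div, ← add_div, ge_iff_le,
        le_div_iff₀ hσpos, zero_mul]
      nlinarith
    nlinarith
  rcases eq_or_lt_of_le hlam0 with hl0 | hl0
  · -- lam = 0 : f₂' minimized at x
    obtain ⟨a, ha⟩ := exists_subg f₁ h₁ h₁c x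
    refine ⟨0, a, w, le_refl _, zero_le_one, ha, ?_, by simp⟩
    intro y
    have h1 := hminlam y
    rw [← hl0] at h1
    simp only [zero_mul, sub_zero, one_mul, zero_add, inner_zero_left] at h1
    have e2 : ⟪w, y - x⟫ = ⟪w, y⟫ - ⟪w, x⟫ := inner_sub_right _ _ _
    simp only [hf₂', inner_neg_left] at h1
    linarith
  rcases eq_or_lt_of_le hlam1 with hl1 | hl1
  · -- lam = 1 : f₁' minimized at x
    obtain ⟨b, hb⟩ := exists_subg f₂ h₂ h₂c x
    refine ⟨1, w, b, zero_le_one, le_refl _, ?_, hb, by simp⟩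
    intro y
    have h1 := hminlam y
    rw [hl1] at h1
    simp only [one_mul, sub_self, zero_mul, add_zero, inner_zero_left] at h1
    have e2 : ⟪w, y - x⟫ = ⟪w, y⟫ - ⟪w, x⟫ := inner_sub_right _ _ _
    simp only [hf₁', inner_neg_left] at h1
    linarith
  · -- 0 < lam < 1
    have h1l : 0 < 1 - lam := by linarith
    obtain ⟨p, hp1, hp2⟩ := subg_split (fun y => lam * f₁' y) (fun y => (1 - lam) * f₂' y)
      (convexOn_mul_const _ _ h₁'c hlam0) (convexOn_mul_const _ _ h₂'c h1l.le)
      (continuous_const.mul h₁'cont) (continuous_const.mul h₂'cont) x 0 hminlam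
    rw [zero_sub] at hp2
    have ha' : IsSubg f₁' x (lam⁻¹ • p) := subg_unscale _ _ hl0 _ _ hp1
    have hb' : IsSubg f₂' x ((1 - lam)⁻¹ • (-p)) := subg_unscale _ _ h1l _ _ hp2
    have ha : IsSubg f₁ x (lam⁻¹ • p - -w) := subg_shift _ _ _ _ ha'
    have hb : IsSubg f₂ x ((1 - lam)⁻¹ • (-p) - -w) := subg_shift _ _ _ _ hb'
    refine ⟨lam, _, _, hlam0, hlam1, ha, hb, ?_⟩
    rw [smul_sub, smul_sub, smul_smul, smul_smul]
    rw [mul_inv_cancel₀ (ne_of_gt hl0), mul_inv_cancel₀ (ne_of_gt h1l)]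
    simp only [one_smul, sub_neg_eq_add, smul_neg, smul_add]
    module

theorem convexOn_normSq : ConvexOn ℝ Set.univ (fun y : E => ‖y‖ ^ 2) := by
  refine ⟨convex_univ, ?_⟩
  intro y1 _ y2 _ a b ha hb hab
  simp only [smul_eq_mul]
  have expand : ‖a • y1 + b • y2‖ ^ 2
      = a ^ 2 * ‖y1‖ ^ 2 + 2 * (a * (b * ⟪y1, y2⟫)) + b ^ 2 * ‖y2‖ ^ 2 := by
    rw [norm_add_sq_real, real_inner_smul_left, real_inner_smul_right, norm_smul, norm_smul,
      mul_pow, mul_pow, Real.norm_eq_abs, Real.norm_eq_abs, sq_abs, sq_abs]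
  rw [expand]
  nlinarith [mul_le_mul_of_nonneg_left (real_inner_le_norm y1 y2) (mul_nonneg ha hb),
    mul_nonneg (mul_nonneg ha hb) (sq_nonneg (‖y1‖ - ‖y2‖)), sq_nonneg (‖y1‖ - ‖y2‖),
    norm_nonneg y1, norm_nonneg y2]

theorem convexOn_finset_sum {ι : Type*} (s : Finset ι) (f : ι → E → ℝ)
    (hf : ∀ i, ConvexOn ℝ Set.univ (f i)) :
    ConvexOn ℝ Set.univ (fun y => ∑ i ∈ s, f i y) := by
  classical
  induction s using Finset.induction_on with
  | empty => simpa using convexOn_const (0 : ℝ) convex_univ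
  | insert _ _ hna ih =>
    simp only [Finset.sum_insert hna]
    exact (hf _).add ih

theorem subg_finsum_split {ι : Type*} [DecidableEq ι] (s : Finset ι) (f₀ : E → ℝ) (f : ι → E → ℝ)
    (h₀ : ConvexOn ℝ Set.univ f₀) (h₀c : Continuous f₀)
    (hf : ∀ i, ConvexOn ℝ Set.univ (f i)) (hfc : ∀ i, Continuous (f i))
    (x u : E)
    (hu : ∀ y, (f₀ x + ∑ i ∈ s, f i x) + ⟪u, y - x⟫ ≤ f₀ y + ∑ i ∈ s, f i y) :
    ∃ (v₀ : E) (v : ι → E), IsSubg f₀ x v₀ ∧ (∀ i ∈ s, IsSubg (f i) x (v i)) ∧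
      u = v₀ + ∑ i ∈ s, v i := by
  induction s using Finset.induction_on generalizing u with
  | empty =>
    refine ⟨u, fun _ => 0, ?_, by simp, by simp⟩
    intro y
    have := hu y
    simpa using this
  | @insert a s hna ih =>
    have hconv : ConvexOn ℝ Set.univ (fun y => f₀ y + ∑ i ∈ s, f i y) :=
      h₀.add (convexOn_finset_sum s f hf)
    have hcont : Continuous (fun y => f₀ y + ∑ i ∈ s, f i y) :=
      h₀c.add (continuous_finset_sum s fun i _ => hfc i)
    obtain ⟨va, hva, hrest⟩ := subg_split (f a) (fun y => f₀ y + ∑ i ∈ s, f i y)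
      (hf a) hconv (hfc a) hcont x u (by
        intro y
        have := hu y
        rw [Finset.sum_insert hna, Finset.sum_insert hna] at this
        linarith)
    obtain ⟨v₀, v, hv₀, hv, hsum⟩ := ih (u - va) (by
      intro y
      have := hrest y
      simp only at this
      linarith)
    refine ⟨v₀, Function.update v a va, hv₀, ?_, ?_⟩
    · intro i hi
      rcases Finset.mem_insert.mp hi with rfl | hi'
      · rw [Function.update_self]
        exact hva
      · rw [Function.update_of_ne (by rintro rfl; exact hna hi')]
        exact hv i hi'
    · rw [Finset.sum_insert hna, Function.update_self]
      have : ∑ i ∈ s, Function.update v a va i = ∑ i ∈ s, v i := by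
        apply Finset.sum_congr rfl
        intro i hi
        rw [Function.update_of_ne (by rintro rfl; exact hna hi)]
      rw [this]
      have h2 : u - va = v₀ + ∑ i ∈ s, v i := hsum
      rw [sub_eq_iff_eq_add] at h2
      rw [h2]
      abel

theorem subg_weak (ρ : ℝ) (f : E → ℝ) (x v' : E)
    (h : IsSubg (fun y => f y + ρ / 2 * ‖y‖ ^ 2) x v') :
    ∀ y, f y ≥ f x + ⟪v' - ρ • x, y - x⟫ - ρ / 2 * ‖y - x‖ ^ 2 := by
  intro y
  have h1 := h y
  simp only at h1
  have e1 : ⟪v' - ρ • x, y - x⟫ = ⟪v', y - x⟫ - ρ * ⟪x, y - x⟫ := by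
    rw [inner_sub_left, real_inner_smul_left]
  have e2 : ‖y - x‖ ^ 2 = ‖y‖ ^ 2 - 2 * ⟪x, y - x⟫ - ‖x‖ ^ 2 := by
    rw [norm_sub_sq_real, inner_sub_right, real_inner_self_eq_norm_sq, real_inner_comm]
    ring
  rw [ge_iff_le, e1, e2]
  nlinarith [h1]

theorem subg_strong (ρ : ℝ) (f : E → ℝ) (x w : E)
    (h : ∀ y, f y ≥ f x + ⟪w, y - x⟫ - ρ / 2 * ‖y - x‖ ^ 2) :
    IsSubg (fun y => f y + ρ / 2 * ‖y‖ ^ 2) x (w + ρ • x) := by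
  intro y
  have h1 := h y
  simp only
  have e1 : ⟪w + ρ • x, y - x⟫ = ⟪w, y - x⟫ + ρ * ⟪x, y - x⟫ := by
    rw [inner_add_left, real_inner_smul_left]
  have e2 : ‖y - x‖ ^ 2 = ‖y‖ ^ 2 - 2 * ⟪x, y - x⟫ - ‖x‖ ^ 2 := by
    rw [norm_sub_sq_real, inner_sub_right, real_inner_self_eq_norm_sq, real_inner_comm]
    ring
  rw [e1]
  rw [e2] at h1
  nlinarith [h1]

theorem inner_small_zero (ρ r : ℝ) (hρ : 0 ≤ ρ) (hr : 0 < r) (c : E)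
    (h : ∀ d : E, ‖d‖ < r → ⟪c, d⟫ ≤ ρ / 2 * ‖d‖ ^ 2) : c = 0 := by
  by_contra hc
  have hcpos : 0 < ‖c‖ := norm_pos_iff.mpr hc
  have key : ∀ t : ℝ, 0 < t → t < r / ‖c‖ → ‖c‖ ^ 2 ≤ (ρ / 2 * ‖c‖ ^ 2) * t := by
    intro t ht htr
    have hd : ‖t • c‖ < r := by
      rw [norm_smul, Real.norm_eq_abs, abs_of_pos ht]
      rw [lt_div_iff₀ hcpos] at htr
      linarith
    have h1 := h (t • c) hd
    rw [real_inner_smul_right, real_inner_self_eq_norm_sq] at h1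
    have e : ‖t • c‖ ^ 2 = t ^ 2 * ‖c‖ ^ 2 := by
      rw [norm_smul, mul_pow, Real.norm_eq_abs, sq_abs]
    rw [e] at h1
    nlinarith
  have := hp_le_zero_of_small (div_pos hr hcpos) key
  nlinarith

theorem subg_norm_le (ρ L : ℝ) (hρ : 0 ≤ ρ) (hL : 0 ≤ L) (f : E → ℝ) (x v : E)
    (hlip : ∀ a b, |f a - f b| ≤ L * ‖a - b‖)
    (hsub : ∀ y, f y ≥ f x + ⟪v, y - x⟫ - ρ / 2 * ‖y - x‖ ^ 2) : ‖v‖ ≤ L := by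
  rcases eq_or_ne v 0 with rfl | hv
  · simpa using hL
  have hvpos : 0 < ‖v‖ := norm_pos_iff.mpr hv
  have key : ∀ t : ℝ, 0 < t → t < 1 → ‖v‖ ^ 2 - L * ‖v‖ ≤ (ρ / 2 * ‖v‖ ^ 2) * t := by
    intro t ht ht1
    have h1 := hsub (x + t • v)
    rw [add_sub_cancel_left] at h1
    rw [real_inner_smul_right, real_inner_self_eq_norm_sq] at h1
    have e : ‖t • v‖ ^ 2 = t ^ 2 * ‖v‖ ^ 2 := by
      rw [norm_smul, mul_pow, Real.norm_eq_abs, sq_abs]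
    rw [e] at h1
    have h2 : f (x + t • v) - f x ≤ L * (t * ‖v‖) := by
      have := hlip (x + t • v) x
      rw [add_sub_cancel_left] at this
      rw [norm_smul, Real.norm_eq_abs, abs_of_pos ht] at this
      exact le_trans (le_abs_self _) this
    nlinarith
  have := hp_le_zero_of_small one_pos key
  nlinarith

theorem div_ineq_clear {a b p q θ : ℝ} (hθ : 0 < θ)
    (h : a + p / (2 * θ) ≤ b + q / (2 * θ)) : a * (2 * θ) + p ≤ b * (2 * θ) + q := by
  have h2θ : (0:ℝ) < 2 * θ := by linarith
  have h2 := mul_le_mul_of_nonneg_right h h2θ.le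
  rw [add_mul, add_mul, div_mul_cancel₀ _ (ne_of_gt h2θ), div_mul_cancel₀ _ (ne_of_gt h2θ)] at h2
  exact h2

theorem lipschitz_continuous (L : ℝ) (hL : 0 ≤ L) (f : E → ℝ)
    (hlip : ∀ a b, |f a - f b| ≤ L * ‖a - b‖) : Continuous f := by
  have : LipschitzWith (Real.toNNReal L) f := by
    apply LipschitzWith.of_dist_le_mul
    intro a b
    rw [Real.dist_eq, dist_eq_norm, Real.coe_toNNReal _ hL]
    exact hlip a b
  exact this.continuous

end HingePenaltyInfra

/-- Main exact penalty theorem: a nearly ε-stationary point of the hinge penalty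
objective Φ(x) = F(x) + (β/m)·Σ_k [h_k(x)]_+ is a nearly ε-KKT point of the
original constrained problem, under the subgradient regularity condition on the
constraints and β > (ε + L_F)/δ. -/
theorem hinge_exact_penalty_nearly_KKT
    {E : Type*} [NormedAddCommGroup E] [InnerProductSpace ℝ E] [CompleteSpace E]
    (m : ℕ) (hm : 1 ≤ m) (F : E → ℝ) (h : Fin m → E → ℝ)
    (ρ₀ ρ₁ L_F L_h β θ ε δ : ℝ)
    (hρ₀ : 0 ≤ ρ₀) (hρ₁ : 0 ≤ ρ₁) (hβ : 0 < β)
    -- F is ρ₀-weakly convex and L_F-Lipschitz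
    (hFwc : ConvexOn ℝ Set.univ (fun x => F x + ρ₀ / 2 * ‖x‖ ^ 2))
    (hFlip : ∀ x y : E, |F x - F y| ≤ L_F * ‖x - y‖)
    -- each h_k is ρ₁-weakly convex and L_h-Lipschitz
    (hhwc : ∀ k, ConvexOn ℝ Set.univ (fun x => h k x + ρ₁ / 2 * ‖x‖ ^ 2))
    (hhlip : ∀ k, ∀ x y : E, |h k x - h k y| ≤ L_h * ‖x - y‖)
    -- parameters: C = ρ₀ + β·ρ₁, 0 < θ < 1/C, ε > 0, δ > 0
    (hθ : 0 < θ) (hθC : θ * (ρ₀ + β * ρ₁) < 1) (hε : 0 < ε) (hδ : 0 < δ)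
    -- regularity condition on the constraints at violating points
    (hreg : ∀ x' : E, (∃ k, 0 < h k x') →
      ∀ w : Fin m → E,
        (∀ k, ∀ y : E,
          max (h k y) 0 ≥ max (h k x') 0 + ⟪w k, y - x'⟫ - ρ₁ / 2 * ‖y - x'‖ ^ 2) →
        δ ≤ ‖(1 / (m : ℝ)) • ∑ k, w k‖)
    -- constant penalty parameter β > (ε + L_F)/δ
    (hβδ : (ε + L_F) / δ < β)
    -- xb minimizes y ↦ Φ(y) + ‖y − x‖²/(2θ), and ‖x − xb‖ ≤ θ·ε
    (x xb : E)
    (hmin : ∀ y : E,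
      (F xb + β / m * ∑ k, max (h k xb) 0) + ‖xb - x‖ ^ 2 / (2 * θ)
        ≤ (F y + β / m * ∑ k, max (h k y) 0) + ‖y - x‖ ^ 2 / (2 * θ))
    (hclose : ‖x - xb‖ ≤ θ * ε) :
    ∃ (lam : Fin m → ℝ) (v : E) (w : Fin m → E),
      (∀ k, 0 ≤ lam k) ∧
      -- v is a ρ₀-subgradient of F at xb
      (∀ y : E, F y ≥ F xb + ⟪v, y - xb⟫ - ρ₀ / 2 * ‖y - xb‖ ^ 2) ∧
      -- each w_k is a ρ₁-subgradient of h_k at xb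
      (∀ k, ∀ y : E, h k y ≥ h k xb + ⟪w k, y - xb⟫ - ρ₁ / 2 * ‖y - xb‖ ^ 2) ∧
      -- (i) approximate stationarity of the Lagrangian
      ‖v + ∑ k, lam k • w k‖ ≤ ε ∧
      -- (ii) feasibility
      (∀ k, h k xb ≤ 0) ∧
      -- (iii) complementary slackness
      (∀ k, lam k * h k xb ≤ 0) ∧ (∀ k, h k xb < 0 → lam k = 0) := by
  rcases subsingleton_or_nontrivial E with hE | hE
  · -- trivial space
    have hfeas : ∀ k, h k xb ≤ 0 := by
      intro k
      by_contra hk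
      push_neg at hk
      have hd := hreg xb ⟨k, hk⟩ (fun _ => 0) (by
        intro k' y
        have hy : y = xb := Subsingleton.elim y xb
        subst hy
        simp)
      simp only [Finset.sum_const, smul_zero, norm_zero] at hd
      linarith
    refine ⟨fun _ => 0, 0, fun _ => 0, fun _ => le_refl 0, ?_, ?_, ?_, hfeas, ?_, ?_⟩
    · intro y
      have hy : y = xb := Subsingleton.elim y xb
      subst hy
      simp
    · intro k y
      have hy : y = xb := Subsingleton.elim y xb
      subst hy
      simp
    · simp [hε.le]
    · intro k
      simp
    · intro k _
      rfl
  · -- nontrivial space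
    classical
    have hmpos : (0:ℝ) < (m:ℝ) := by exact_mod_cast hm
    have hmne : (m:ℝ) ≠ 0 := ne_of_gt hmpos
    have hβm : (0:ℝ) < β / m := div_pos hβ hmpos
    obtain ⟨p0, q0, hpq⟩ := exists_pair_ne E
    have hpq' : (0:ℝ) < ‖p0 - q0‖ := by
      rw [norm_pos_iff, sub_ne_zero]; exact hpq
    have hLF : 0 ≤ L_F := by
      have h1 := hFlip p0 q0
      nlinarith [abs_nonneg (F p0 - F q0)]
    have hLh : 0 ≤ L_h := by
      have h1 := hhlip ⟨0, hm⟩ p0 q0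
      nlinarith [abs_nonneg (h ⟨0, hm⟩ p0 - h ⟨0, hm⟩ q0)]
    have hFc : Continuous F := lipschitz_continuous L_F hLF F hFlip
    have hhc : ∀ k, Continuous (h k) := fun k => lipschitz_continuous L_h hLh (h k) (hhlip k)
    set C : ℝ := ρ₀ + β * ρ₁ with hC
    have hC0 : 0 ≤ C := by positivity
    -- the convex pieces
    set Ftil : E → ℝ := fun y => F y + ρ₀ / 2 * ‖y‖ ^ 2 with hFtil
    set Hma : Fin m → E → ℝ := fun k y => max (h k y) 0 + ρ₁ / 2 * ‖y‖ ^ 2 with hHma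
    set Hk : Fin m → E → ℝ := fun k y => β / m * Hma k y with hHk
    have hnormSqc : Continuous (fun y : E => ρ₁ / 2 * ‖y‖ ^ 2) :=
      continuous_const.mul ((continuous_norm).pow 2)
    have hq1conv : ConvexOn ℝ Set.univ (fun y : E => ρ₁ / 2 * ‖y‖ ^ 2) :=
      convexOn_mul_const _ _ convexOn_normSq (by positivity)
    have hFtilc : Continuous Ftil :=
      hFc.add (continuous_const.mul ((continuous_norm).pow 2))
    have hHmaeq : ∀ k, Hma k = fun y => max (h k y + ρ₁ / 2 * ‖y‖ ^ 2) (ρ₁ / 2 * ‖y‖ ^ 2) := by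
      intro k
      funext y
      rw [hHma]
      simp only
      rw [← max_add_add_right, zero_add]
    have hHmaconv : ∀ k, ConvexOn ℝ Set.univ (Hma k) := by
      intro k
      rw [hHmaeq k]
      exact (hhwc k).sup hq1conv
    have hHmac : ∀ k, Continuous (Hma k) := by
      intro k
      apply Continuous.add
      · exact (hhc k).max continuous_const
      · exact hnormSqc
    have hHkconv : ∀ k, ConvexOn ℝ Set.univ (Hk k) :=
      fun k => convexOn_mul_const _ _ (hHmaconv k) hβm.le
    have hHkc : ∀ k, Continuous (Hk k) := fun k => continuous_const.mul (hHmac k)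
    set Ψ : E → ℝ := fun y => Ftil y + ∑ k, Hk k y with hΨ
    have hΨconv : ConvexOn ℝ Set.univ Ψ :=
      hFwc.add (convexOn_finset_sum Finset.univ Hk hHkconv)
    have hΨeq : ∀ y, Ψ y = (F y + β / m * ∑ k, max (h k y) 0) + C / 2 * ‖y‖ ^ 2 := by
      intro y
      simp only [hΨ, hHk, hHma, hFtil, hC]
      rw [← Finset.mul_sum, Finset.sum_add_distrib, Finset.sum_const, Finset.card_univ,
        Fintype.card_fin, nsmul_eq_mul]
      field_simp
      ring
    -- Step B : u is an exact subgradient of Ψ at xb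
    set u : E := θ⁻¹ • (x - xb) + C • xb with hudef
    have h2θ : (0:ℝ) < 2 * θ := by linarith
    have hΨsub : IsSubg Ψ xb u := by
      intro y
      set D : ℝ := ‖y - xb‖ ^ 2 with hD
      set P : ℝ := ⟪x - xb, y - xb⟫ with hP
      set Q : ℝ := ⟪xb, y - xb⟫ with hQ
      have e3 : ⟪u, y - xb⟫ = θ⁻¹ * P + C * Q := by
        rw [hudef, inner_add_left, real_inner_smul_left, real_inner_smul_left]
      have e3' : ⟪u, y - xb⟫ * (2 * θ) = 2 * P + 2 * θ * C * Q := by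
        rw [e3]
        field_simp
      have hA : Ψ xb + ⟪u, y - xb⟫ - Ψ y ≤ 0 := by
        apply hp_le_zero_of_small one_pos (K := D * (1 - C * θ) / (2 * θ))
        intro t ht ht1
        set yt : E := xb + t • (y - xb) with hyt
        have hcomb : yt = (1 - t) • xb + t • y := by rw [hyt]; module
        have hconv := hΨconv.2 (Set.mem_univ xb) (Set.mem_univ y)
          (by linarith : (0:ℝ) ≤ 1 - t) ht.le (by ring)
        rw [← hcomb] at hconv
        simp only [smul_eq_mul] at hconv
        have hsmulsq : ‖t • (y - xb)‖ ^ 2 = t ^ 2 * D := by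
          rw [norm_smul, mul_pow, Real.norm_eq_abs, sq_abs, hD]
        have e1 : ‖yt - x‖ ^ 2 = ‖xb - x‖ ^ 2 - 2 * (t * P) + t ^ 2 * D := by
          have hrw : yt - x = (xb - x) + t • (y - xb) := by rw [hyt]; module
          rw [hrw, norm_add_sq_real, real_inner_smul_right, hsmulsq]
          have : ⟪xb - x, y - xb⟫ = -P := by
            rw [hP, ← inner_neg_left, neg_sub]
          rw [this]
          ring
        have e2 : ‖yt‖ ^ 2 = ‖xb‖ ^ 2 + 2 * (t * Q) + t ^ 2 * D := by
          have hrw : yt = xb + t • (y - xb) := hyt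
          rw [hrw, norm_add_sq_real, real_inner_smul_right, hsmulsq, hQ]
        have hm3 := div_ineq_clear hθ (hmin yt)
        have hsxb := hΨeq xb
        have hsyt := hΨeq yt
        have hsy := hΨeq y
        -- multiplied versions
        have hsxb2 : (F xb + β / m * ∑ k, max (h k xb) 0) * (2 * θ)
            = Ψ xb * (2 * θ) - C * θ * ‖xb‖ ^ 2 := by
          rw [hsxb]; ring
        have hsyt2 : (F yt + β / m * ∑ k, max (h k yt) 0) * (2 * θ)
            = Ψ yt * (2 * θ) - C * θ * ‖yt‖ ^ 2 := by
          rw [hsyt]; ring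
        have hconv2 : Ψ yt * (2 * θ) ≤ ((1 - t) * Ψ xb + t * Ψ y) * (2 * θ) :=
          mul_le_mul_of_nonneg_right hconv h2θ.le
        have e2θ : C * θ * ‖yt‖ ^ 2 = C * θ * ‖xb‖ ^ 2 + 2 * (C * θ * (t * Q))
            + C * θ * (t ^ 2 * D) := by rw [e2]; ring
        have e3t : t * (⟪u, y - xb⟫ * (2 * θ)) = t * (2 * P + 2 * θ * C * Q) := by
          rw [e3']
        rw [hsxb2, hsyt2, e1, e2θ] at hm3
        have q1 : Ψ xb * (2 * θ) ≤ Ψ yt * (2 * θ)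
            - 2 * (C * θ * (t * Q)) - C * θ * (t ^ 2 * D) - 2 * (t * P) + t ^ 2 * D := by
          linarith [hm3]
        have ht2 : t * ((Ψ xb + ⟪u, y - xb⟫ - Ψ y) * (2 * θ))
            ≤ t * (t * (D * (1 - C * θ))) := by
          linarith [q1, hconv2, e3t]
        have ht3 : (Ψ xb + ⟪u, y - xb⟫ - Ψ y) * (2 * θ) ≤ t * (D * (1 - C * θ)) :=
          le_of_mul_le_mul_left ht2 ht
        have hKt : (D * (1 - C * θ) / (2 * θ) * t) * (2 * θ) = t * (D * (1 - C * θ)) := by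
          field_simp
        have := le_of_mul_le_mul_right (le_of_le_of_eq ht3 hKt.symm) h2θ
        exact this
      linarith [hA]
    -- Step C : decompose u
    obtain ⟨v', vfun, hv'sub, hvfun, husum⟩ := subg_finsum_split Finset.univ Ftil Hk
      hFwc hFtilc hHkconv hHkc xb u hΨsub
    set v : E := v' - ρ₀ • xb with hvdef
    have hvsub : ∀ y, F y ≥ F xb + ⟪v, y - xb⟫ - ρ₀ / 2 * ‖y - xb‖ ^ 2 :=
      subg_weak ρ₀ F xb v' hv'sub
    set wt' : Fin m → E := fun k => (β / m)⁻¹ • vfun k with hwt'def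
    have hwt'sub : ∀ k, IsSubg (Hma k) xb (wt' k) := by
      intro k
      apply subg_unscale (Hma k) (β / m) hβm xb (vfun k)
      have := hvfun k (Finset.mem_univ k)
      simpa [hHk] using this
    set wt : Fin m → E := fun k => wt' k - ρ₁ • xb with hwtdef
    have hwtsub : ∀ k, ∀ y, max (h k y) 0
        ≥ max (h k xb) 0 + ⟪wt k, y - xb⟫ - ρ₁ / 2 * ‖y - xb‖ ^ 2 := by
      intro k
      exact subg_weak ρ₁ (fun y => max (h k y) 0) xb (wt' k) (hwt'sub k)
    -- key sum identity
    have hvfuneq : ∀ k, vfun k = (β / m) • wt' k := by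
      intro k
      rw [hwt'def]
      simp only
      rw [smul_smul, mul_inv_cancel₀ (ne_of_gt hβm), one_smul]
    have hsumident : v + (β / (m:ℝ)) • ∑ k, wt k = θ⁻¹ • (x - xb) := by
      have h1 : ∑ k, vfun k = (β / m) • ∑ k, wt' k := by
        rw [Finset.smul_sum]
        exact Finset.sum_congr rfl fun k _ => hvfuneq k
      have h2 : ∑ k, wt' k = ∑ k, wt k + (m : ℝ) • (ρ₁ • xb) := by
        have : ∀ k : Fin m, wt' k = wt k + ρ₁ • xb := by
          intro k
          rw [hwtdef]
          simp only
          abel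
        rw [Finset.sum_congr rfl fun k _ => this k, Finset.sum_add_distrib,
          Finset.sum_const, Finset.card_univ, Fintype.card_fin, Nat.cast_smul_eq_nsmul ℝ]
      have h3 : (β / m) • ((m : ℝ) • (ρ₁ • xb)) = (β * ρ₁) • xb := by
        rw [smul_smul, smul_smul]
        congr 1
        field_simp
      have h4 : u = v' + ∑ k, vfun k := husum
      rw [h1, h2, smul_add, h3] at h4
      rw [hudef] at h4
      have hC' : C • xb = ρ₀ • xb + (β * ρ₁) • xb := by
        rw [hC, add_smul]
      rw [hC'] at h4
      -- h4 : θ⁻¹ • (x - xb) + (ρ₀ • xb + (β*ρ₁) • xb) = v' + ((β/m) • ∑ wt + (β*ρ₁) • xb)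
      rw [hvdef]
      calc v' - ρ₀ • xb + (β / (m:ℝ)) • ∑ k, wt k
          = (v' + ((β / (m:ℝ)) • ∑ k, wt k + (β * ρ₁) • xb)) - (ρ₀ • xb + (β * ρ₁) • xb) := by
            abel
        _ = (θ⁻¹ • (x - xb) + (ρ₀ • xb + (β * ρ₁) • xb)) - (ρ₀ • xb + (β * ρ₁) • xb) := by
            rw [← h4]
        _ = θ⁻¹ • (x - xb) := by abel
    -- norm of the proximal gradient
    have hgnorm : ‖θ⁻¹ • (x - xb)‖ ≤ ε := by
      rw [norm_smul, Real.norm_eq_abs, abs_of_pos (inv_pos.mpr hθ)]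
      calc θ⁻¹ * ‖x - xb‖ ≤ θ⁻¹ * (θ * ε) :=
        mul_le_mul_of_nonneg_left hclose (inv_pos.mpr hθ).le
      _ = ε := by field_simp
    -- Step D : feasibility
    have hfeas : ∀ k, h k xb ≤ 0 := by
      by_contra hk
      push_neg at hk
      obtain ⟨k0, hk0⟩ := hk
      have hregapp := hreg xb ⟨k0, hk0⟩ wt hwtsub
      have hnv : ‖v‖ ≤ L_F := subg_norm_le ρ₀ L_F hρ₀ hLF F xb v hFlip hvsub
      have hbd : (β / (m:ℝ)) • ∑ k, wt k = θ⁻¹ • (x - xb) - v := by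
        rw [← hsumident]; abel
      have hsplit : (β / (m:ℝ)) • ∑ k, wt k = β • ((1 / (m:ℝ)) • ∑ k, wt k) := by
        rw [smul_smul]
        congr 1
        field_simp
      have hnorm1 : ‖(β / (m:ℝ)) • ∑ k, wt k‖ = β * ‖(1 / (m:ℝ)) • ∑ k, wt k‖ := by
        rw [hsplit, norm_smul, Real.norm_eq_abs, abs_of_pos hβ]
      have hub : ‖(β / (m:ℝ)) • ∑ k, wt k‖ ≤ ε + L_F := by
        rw [hbd]
        calc ‖θ⁻¹ • (x - xb) - v‖ ≤ ‖θ⁻¹ • (x - xb)‖ + ‖v‖ := norm_sub_le _ _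
        _ ≤ ε + L_F := add_le_add hgnorm hnv
      have hlb : β * δ ≤ β * ‖(1 / (m:ℝ)) • ∑ k, wt k‖ :=
        mul_le_mul_of_nonneg_left hregapp hβ.le
      have hβδ2 : ε + L_F < β * δ := by
        rw [div_lt_iff₀ hδ] at hβδ
        linarith
      rw [← hnorm1] at hlb
      linarith
    -- Step E : per-constraint multipliers
    have hkey : ∀ k, ∃ (l : ℝ) (wk : E), 0 ≤ l ∧
        (∀ y, h k y ≥ h k xb + ⟪wk, y - xb⟫ - ρ₁ / 2 * ‖y - xb‖ ^ 2) ∧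
        l • wk = (β / (m:ℝ)) • wt k ∧ (h k xb < 0 → l = 0) := by
      intro k
      have hhtilc : Continuous (fun y => h k y + ρ₁ / 2 * ‖y‖ ^ 2) := (hhc k).add hnormSqc
      rcases lt_or_eq_of_le (hfeas k) with hlt | heq
      · -- h k xb < 0 : wt k = 0
        have hwt0 : wt k = 0 := by
          apply inner_small_zero ρ₁ ((-h k xb) / (L_h + 1)) hρ₁
            (div_pos (by linarith) (by linarith)) (wt k)
          intro d hd
          have hy := hwtsub k (xb + d)
          rw [add_sub_cancel_left] at hy
          have hneg : h k (xb + d) < 0 := by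
            have h1 := hhlip k (xb + d) xb
            rw [add_sub_cancel_left] at h1
            have h2 : h k (xb + d) - h k xb ≤ L_h * ‖d‖ := le_trans (le_abs_self _) h1
            have h3 : L_h * ‖d‖ ≤ (L_h + 1) * ‖d‖ := by nlinarith [norm_nonneg d]
            have h4 : ‖d‖ * (L_h + 1) < -h k xb := by
              rwa [lt_div_iff₀ (by linarith : (0:ℝ) < L_h + 1)] at hd
            nlinarith [norm_nonneg d]
          rw [max_eq_right hneg.le, max_eq_right hlt.le] at hy
          linarith
        obtain ⟨a, ha⟩ := exists_subg (fun y => h k y + ρ₁ / 2 * ‖y‖ ^ 2) (hhwc k) hhtilc xb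
        exact ⟨0, a - ρ₁ • xb, le_refl 0, subg_weak ρ₁ (h k) xb a ha,
          by rw [hwt0, zero_smul, smul_zero], fun _ => rfl⟩
      · -- h k xb = 0
        have hmaxsub : IsSubg (fun y => max (h k y + ρ₁ / 2 * ‖y‖ ^ 2) (ρ₁ / 2 * ‖y‖ ^ 2))
            xb (wt' k) := by
          have h1 := hwt'sub k
          rw [hHmaeq k] at h1
          exact h1
        obtain ⟨lam, a, b, hlam0, hlam1, ha, hb, hab⟩ := subg_max_split
          (fun y => h k y + ρ₁ / 2 * ‖y‖ ^ 2) (fun y => ρ₁ / 2 * ‖y‖ ^ 2)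
          (hhwc k) hq1conv hhtilc hnormSqc xb (wt' k)
          (by rw [heq]; ring) hmaxsub
        have hbval : b = ρ₁ • xb := by
          have hzero : b - ρ₁ • xb = 0 := by
            apply inner_small_zero ρ₁ 1 hρ₁ one_pos
            intro d hd
            have h1 := hb (xb + d)
            rw [add_sub_cancel_left] at h1
            simp only at h1
            have e1 : ‖xb + d‖ ^ 2 = ‖xb‖ ^ 2 + 2 * ⟪xb, d⟫ + ‖d‖ ^ 2 := norm_add_sq_real _ _
            rw [inner_sub_left, real_inner_smul_left]
            nlinarith [h1, e1]
          rw [sub_eq_zero] at hzero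
          exact hzero
        refine ⟨β / m * lam, a - ρ₁ • xb, by positivity,
          subg_weak ρ₁ (h k) xb a ha, ?_, fun hc => absurd heq (ne_of_lt hc)⟩
        rw [hwtdef]
        simp only
        rw [hab, hbval]
        module
    choose lam wfun hlam0 hwsub hlw hzero using hkey
    refine ⟨lam, v, wfun, hlam0, hvsub, hwsub, ?_, hfeas, ?_, hzero⟩
    · have hsum : ∑ k, lam k • wfun k = (β / (m:ℝ)) • ∑ k, wt k := by
        rw [Finset.smul_sum]
        exact Finset.sum_congr rfl fun k _ => hlw k
      rw [hsum]
      have : v + (β / (m:ℝ)) • ∑ k, wt k = θ⁻¹ • (x - xb) := hsumident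
      rw [this]
      exact hgnorm
    · intro k
      calc lam k * h k xb ≤ lam k * 0 := mul_le_mul_of_nonneg_left (hfeas k) (hlam0 k)
      _ = 0 := mul_zero _
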